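/- Let G be an invertible object of a ribbon fusion category with G⊗G ≅ 1 and theta_G^2 = 1, and let A_nu = 1 ⊕ (G ⊠ K^nu) carry its special Frobenius algebra structure in C ⊠ SVect. Then the restriction mu_{GG} of the multiplication to the G-summand satisfies mu_{GG} ∘ sigma_{G-hat,G-hat} = nu · dim(G) · theta_G · mu_{GG}, where G-hat = G ⊠ K^nu. In particular A_nu is commutative if and only if dim(G) · theta_G = nu. -/

import Mathlib

open CategoryTheory Category CategoryTheory.Limits MonoidalCategory

universe v u

/-- A ribbon structure (balancing/twist compatible with braiding) on a braided
monoidal category. -/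
class RibbonTwist (C : Type u) [Category.{v} C] [MonoidalCategory C]
    [BraidedCategory C] where
  θ : ∀ X : C, X ≅ X
  naturality : ∀ {X Y : C} (f : X ⟶ Y), (θ X).hom ≫ f = f ≫ (θ Y).hom
  θ_tensor : ∀ X Y : C,
    (θ (X ⊗ Y)).hom = (β_ X Y).hom ≫ (β_ Y X).hom ≫ ((θ X).hom ⊗ₘ (θ Y).hom)
  θ_unit : (θ (𝟙_ C)).hom = 𝟙 (𝟙_ C)

namespace RibbonTwist

variable {C : Type u} [Category.{v} C] [MonoidalCategory C] [BraidedCategory C]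
  [RibbonTwist C]

/-- The categorical (ribbon/quantum) trace of an endomorphism. -/
noncomputable def trC {X : C} [HasRightDual X] (f : X ⟶ X) : 𝟙_ C ⟶ 𝟙_ C :=
  η_ X Xᘁ ≫ ((f ≫ (θ X).hom) ▷ Xᘁ) ≫ (β_ X Xᘁ).hom ≫ ε_ X Xᘁ

/-- The quantum (categorical) dimension of an object. -/
noncomputable def qdim (X : C) [HasRightDual X] : 𝟙_ C ⟶ 𝟙_ C :=
  trC (𝟙 X)

end RibbonTwist

open RibbonTwist

section Frobenius

variable {C : Type u} [Category.{v} C] [MonoidalCategory C]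

/-- A Frobenius algebra structure on a fixed object `A` of a monoidal category. -/
structure FrobeniusOn (A : C) where
  mul : A ⊗ A ⟶ A
  one : 𝟙_ C ⟶ A
  comul : A ⟶ A ⊗ A
  counit : A ⟶ 𝟙_ C
  mul_assoc' : (mul ▷ A) ≫ mul = (α_ A A A).hom ≫ (A ◁ mul) ≫ mul
  one_mul' : (one ▷ A) ≫ mul = (λ_ A).hom
  mul_one' : (A ◁ one) ≫ mul = (ρ_ A).hom
  comul_assoc' : comul ≫ (comul ▷ A) = comul ≫ (A ◁ comul) ≫ (α_ A A A).inv
  counit_comul' : comul ≫ (counit ▷ A) = (λ_ A).inv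
  comul_counit' : comul ≫ (A ◁ counit) = (ρ_ A).inv
  frobenius' : mul ≫ comul = (A ◁ comul) ≫ (α_ A A A).inv ≫ (mul ▷ A)
  frobenius'' : mul ≫ comul = (comul ▷ A) ≫ (α_ A A A).hom ≫ (A ◁ mul)

variable {A : C}

/-- (Normalised) specialness: `μ ∘ Δ = id` and `ε ∘ η ≠ 0`. -/
def FrobeniusOn.IsSpecial [Preadditive C] (F : FrobeniusOn A) : Prop :=
  F.comul ≫ F.mul = 𝟙 A ∧ F.one ≫ F.counit ≠ 0

/-- The Nakayama automorphism of a Frobenius algebra in a braided category,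
built from the copairing `Δ ∘ η`, the pairing `ε ∘ μ` and the braiding; it
measures the failure of the Frobenius pairing to be symmetric. -/
noncomputable def FrobeniusOn.nakayama [BraidedCategory C] (F : FrobeniusOn A) : A ⟶ A :=
  (λ_ A).inv ≫ ((F.one ≫ F.comul) ▷ A) ≫ (α_ A A A).hom ≫
    (A ◁ ((β_ A A).hom ≫ F.mul ≫ F.counit)) ≫ (ρ_ A).hom

/-- The inverse Nakayama automorphism. -/
noncomputable def FrobeniusOn.nakayamaInv [BraidedCategory C] (F : FrobeniusOn A) : A ⟶ A :=
  (ρ_ A).inv ≫ (A ◁ (F.one ≫ F.comul)) ≫ (α_ A A A).inv ≫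
    (((β_ A A).inv ≫ F.mul ≫ F.counit) ▷ A) ≫ (λ_ A).hom

/-- Iterated composition of an endomorphism. -/
noncomputable def FrobeniusOn.powAux (F : FrobeniusOn A) (g : A ⟶ A) : ℕ → (A ⟶ A)
  | 0 => 𝟙 A
  | n + 1 => FrobeniusOn.powAux F g n ≫ g

/-- Integer powers `N^n` of the Nakayama automorphism. -/
noncomputable def FrobeniusOn.nakZpow [BraidedCategory C] (F : FrobeniusOn A) : ℤ → (A ⟶ A)
  | Int.ofNat n => F.powAux F.nakayama n
  | Int.negSucc n => F.powAux F.nakayamaInv (n + 1)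

/-- A bimodule over a Frobenius algebra `F` on `A`. -/
structure BimodOver (F : FrobeniusOn A) where
  X : C
  actLeft : A ⊗ X ⟶ X
  actRight : X ⊗ A ⟶ X
  one_actLeft : (F.one ▷ X) ≫ actLeft = (λ_ X).hom
  actLeft_assoc : (F.mul ▷ X) ≫ actLeft = (α_ A A X).hom ≫ (A ◁ actLeft) ≫ actLeft
  actRight_one : (X ◁ F.one) ≫ actRight = (ρ_ X).hom
  actRight_assoc : (actRight ▷ A) ≫ actRight = (α_ X A A).hom ≫ (X ◁ F.mul) ≫ actRight
  middle : (actLeft ▷ A) ≫ actRight = (α_ A X A).hom ≫ (A ◁ actRight) ≫ actLeft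

/-- The regular bimodule of a Frobenius algebra over itself. -/
noncomputable def FrobeniusOn.regBimod (F : FrobeniusOn A) : BimodOver F where
  X := A
  actLeft := F.mul
  actRight := F.mul
  one_actLeft := F.one_mul'
  actLeft_assoc := F.mul_assoc'
  actRight_one := F.mul_one'
  actRight_assoc := F.mul_assoc'
  middle := F.mul_assoc'

/-- The `in`-going bulk-field projector `Q^{(in)}` (with twist `g`, typically a
power `N^n` of the Nakayama automorphism) acting on morphisms `ψ : W ⟶ M`,
following the standard TFT bulk-projector diagram: the copairing `Δ ∘ η` of the
algebra is inserted, one leg (twisted by `g`) is braided past the input `W` and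
acts on the right of `M`, the other leg acts on the left. -/
noncomputable def Qin [BraidedCategory C] (F : FrobeniusOn A) (M : BimodOver F)
    (g : A ⟶ A) {W : C} (ψ : W ⟶ M.X) : W ⟶ M.X :=
  (λ_ W).inv ≫ ((F.one ≫ F.comul) ▷ W) ≫ (α_ A A W).hom ≫
    (A ◁ (g ▷ W)) ≫ (A ◁ (β_ A W).hom) ≫ (A ◁ (ψ ▷ A)) ≫
    (A ◁ M.actRight) ≫ M.actLeft

/-- The `out`-going bulk-field projector `Q^{(out)}` acting on morphisms
`φ : M ⟶ W`. -/
noncomputable def Qout [BraidedCategory C] (F : FrobeniusOn A) (M : BimodOver F)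
    (g : A ⟶ A) {W : C} (φ : M.X ⟶ W) : M.X ⟶ W :=
  (λ_ M.X).inv ≫ ((F.one ≫ F.comul) ▷ M.X) ≫ (α_ A A M.X).hom ≫
    (A ◁ (g ▷ M.X)) ≫ (A ◁ M.actLeft) ≫ (β_ A M.X).hom ≫ M.actRight ≫ φ

/-- The idempotent on `X ⊗ Y` whose image is the relative tensor product
`X ⊗_A Y` over the (special) Frobenius algebra `A`. -/
noncomputable def relTensorIdem (F : FrobeniusOn A) (X Y : BimodOver F) :
    X.X ⊗ Y.X ⟶ X.X ⊗ Y.X :=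
  (X.X ◁ (λ_ Y.X).inv) ≫ (X.X ◁ ((F.one ≫ F.comul) ▷ Y.X)) ≫
    (X.X ◁ (α_ A A Y.X).hom) ≫ (α_ X.X A (A ⊗ Y.X)).inv ≫
    (X.actRight ⊗ₘ Y.actLeft)

end Frobenius


section AuxInv

variable {C : Type u} [Category.{v} C] [MonoidalCategory C]

/-- Tensoring on the right with a "self-inverse" object is a self-equivalence. -/
noncomputable def tensorGEquiv (G : C) (e : G ⊗ G ≅ 𝟙_ C) : C ≌ C :=
  CategoryTheory.Equivalence.mk (tensorRight G) (tensorRight G)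
    (NatIso.ofComponents
      (fun X => (ρ_ X).symm ≪≫ (whiskerLeftIso X e).symm ≪≫ (α_ X G G).symm)
      (by
        intro X Y f; dsimp [whiskerLeftIso]
        rw [rightUnitor_inv_naturality_assoc, ← whisker_exchange_assoc,
          associator_inv_naturality_left]; simp))
    (NatIso.ofComponents
      (fun X => α_ X G G ≪≫ whiskerLeftIso X e ≪≫ ρ_ X)
      (by
        intro X Y f; dsimp [whiskerLeftIso]
        rw [associator_naturality_left_assoc, ← whisker_exchange_assoc,
          rightUnitor_naturality]; simp))

omit [MonoidalCategory C] in
lemma mono_map_of_selfequivalence (E : C ≌ C) {X Y : C} (f : X ⟶ Y) [Mono f] :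
    Mono (E.functor.map f) := by
  constructor
  intro Z u v huv
  apply E.inverse.map_injective
  have h2 : E.inverse.map (E.functor.map f)
      = E.unitInv.app X ≫ f ≫ E.unit.app Y := by simp
  have h3 := congrArg E.inverse.map huv
  rw [Functor.map_comp, Functor.map_comp, h2] at h3
  simp only [← Category.assoc] at h3
  rw [cancel_mono, cancel_mono, cancel_mono] at h3
  exact h3

lemma id_G_ne_zero [Preadditive C] [MonoidalPreadditive C]
    (hunit : Simple (𝟙_ C)) (G : C) (e : G ⊗ G ≅ 𝟙_ C) : 𝟙 G ≠ 0 := by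
  haveI := hunit
  intro hG
  apply id_nonzero (𝟙_ C)
  calc 𝟙 (𝟙_ C) = e.inv ≫ 𝟙 (G ⊗ G) ≫ e.hom := by simp
    _ = e.inv ≫ (𝟙 G ⊗ₘ 𝟙 G) ≫ e.hom := by rw [id_tensorHom_id]
    _ = 0 := by rw [hG, MonoidalPreadditive.zero_tensor, zero_comp, comp_zero]

lemma simple_G_of_selfinv [Preadditive C] [MonoidalPreadditive C]
    [HasKernels C]
    (hunit : Simple (𝟙_ C)) (G : C) (e : G ⊗ G ≅ 𝟙_ C) : Simple G := by
  haveI := hunit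
  haveI : (tensorRight G).IsEquivalence := (tensorGEquiv G e).isEquivalence_functor
  constructor
  intro Y f m
  constructor
  · intro hiso h0
    apply id_G_ne_zero hunit G e
    have h1 := IsIso.inv_hom_id f
    simp only [h0, comp_zero] at h1
    exact h1.symm
  · intro hf0
    have hm : Mono ((tensorRight G).map f) :=
      mono_map_of_selfequivalence (tensorGEquiv G e) f
    have hmap : (tensorRight G).map f = f ▷ G := rfl
    rw [hmap] at hm
    haveI := hm
    have hnz : (f ▷ G) ≫ e.hom ≠ 0 := by
      intro h0
      apply hf0
      apply (tensorRight G).map_injective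
      rw [hmap]
      have hfg : f ▷ G = ((f ▷ G) ≫ e.hom) ≫ e.inv := by simp
      have : (tensorRight G).map (0 : Y ⟶ G) = (0 : Y ⟶ G) ▷ G := rfl
      rw [this, MonoidalPreadditive.zero_whiskerRight, hfg, h0, zero_comp]
    haveI : IsIso ((f ▷ G) ≫ e.hom) := isIso_of_mono_of_nonzero hnz
    have hiso2 : IsIso ((tensorRight G).map f) := by
      rw [hmap]
      have hfg : f ▷ G = ((f ▷ G) ≫ e.hom) ≫ e.inv := by simp
      rw [hfg]; infer_instance
    exact isIso_of_reflects_iso f (tensorRight G)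

lemma hom_unit_to_G_eq_zero [Preadditive C] [MonoidalPreadditive C] [HasKernels C]
    (hunit : Simple (𝟙_ C)) (G : C) (e : G ⊗ G ≅ 𝟙_ C) (hne : IsEmpty (G ≅ 𝟙_ C))
    (f : 𝟙_ C ⟶ G) : f = 0 := by
  haveI := hunit
  haveI := simple_G_of_selfinv hunit G e
  by_contra h0
  haveI : IsIso f := isIso_of_hom_simple h0
  exact hne.false (asIso f).symm

lemma hom_G_to_unit_eq_zero [Preadditive C] [MonoidalPreadditive C] [HasKernels C]
    (hunit : Simple (𝟙_ C)) (G : C) (e : G ⊗ G ≅ 𝟙_ C) (hne : IsEmpty (G ≅ 𝟙_ C))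
    (f : G ⟶ 𝟙_ C) : f = 0 := by
  haveI : (tensorRight G).IsEquivalence := (tensorGEquiv G e).isEquivalence_functor
  have h1 : e.inv ≫ (f ▷ G) ≫ (λ_ G).hom = 0 :=
    hom_unit_to_G_eq_zero hunit G e hne _
  have h2 : f ▷ G = 0 := by
    calc f ▷ G = e.hom ≫ (e.inv ≫ (f ▷ G) ≫ (λ_ G).hom) ≫ (λ_ G).inv := by simp
      _ = 0 := by rw [h1, zero_comp, comp_zero]
  apply (tensorRight G).map_injective
  have hmap : (tensorRight G).map f = f ▷ G := rfl
  have hmap0 : (tensorRight G).map (0 : G ⟶ 𝟙_ C) = (0 : G ⟶ 𝟙_ C) ▷ G := rfl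
  rw [hmap, hmap0, MonoidalPreadditive.zero_whiskerRight, h2]

end AuxInv

/-!
STATEMENT 11. `G` stands for the object `Ĝ = G ⊠ K^ν` of `C-hat = C ⊠ SVect`
(`ν = ±1` the parity of the second summand of `A_ν`), `d = dim G` and
`t = θ_G` (both `±1`), so that the self-braiding of `Ĝ` is the scalar
`ν·d·t` (the extra sign `ν` coming from the Koszul braiding of `K^ν` with
itself).  For any special Frobenius algebra structure `F` on
`A_ν = 𝟙 ⊕ Ĝ`, the restriction `μ_GG` of the multiplication to the
`Ĝ`-summand satisfies `μ_GG ∘ σ_{Ĝ,Ĝ} = ν·dim(G)·θ_G · μ_GG`, and `A_ν` is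
commutative if and only if `dim(G)·θ_G = ν`.
-/
theorem mulGG_selfbraiding_and_commutativity
    {C : Type u} [Category.{v} C] [MonoidalCategory C]
    [BraidedCategory C] [RightRigidCategory C] [RibbonTwist C]
    [Preadditive C] [CategoryTheory.Linear ℂ C] [MonoidalPreadditive C]
    [MonoidalLinear ℂ C] [HasKernels C] [HasBinaryBiproducts C]
    [∀ X Y : C, FiniteDimensional ℂ (X ⟶ Y)]
    (hunit : Simple (𝟙_ C))
    (G : C) (e : G ⊗ G ≅ 𝟙_ C) (hne : IsEmpty (G ≅ 𝟙_ C))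
    (ν d t : ℂ) (hν : ν = 1 ∨ ν = -1) (hd : d = 1 ∨ d = -1)
    (ht2 : t = 1 ∨ t = -1)
    (ht : (RibbonTwist.θ G).hom = t • 𝟙 G)
    (hqd : qdim G = (ν * d) • 𝟙 (𝟙_ C))
    (hb : (β_ G G).hom = (ν * d * t) • 𝟙 (G ⊗ G))
    (F : FrobeniusOn (𝟙_ C ⊞ G)) (hF : F.IsSpecial) :
    (β_ G G).hom ≫ (((biprod.inr : G ⟶ 𝟙_ C ⊞ G) ⊗ₘ (biprod.inr : G ⟶ 𝟙_ C ⊞ G)) ≫ F.mul) =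
      (ν * d * t) • (((biprod.inr : G ⟶ 𝟙_ C ⊞ G) ⊗ₘ (biprod.inr : G ⟶ 𝟙_ C ⊞ G)) ≫ F.mul) ∧
    (((β_ (𝟙_ C ⊞ G) (𝟙_ C ⊞ G)).hom ≫ F.mul = F.mul) ↔ d * t = ν) := by
    classical
  haveI := hunit
  have hnu2 : ν * ν = 1 := by rcases hν with h | h <;> rw [h] <;> norm_num
  have part1 : (β_ G G).hom ≫ (((biprod.inr : G ⟶ 𝟙_ C ⊞ G) ⊗ₘ (biprod.inr : G ⟶ 𝟙_ C ⊞ G)) ≫ F.mul) =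
      (ν * d * t) • (((biprod.inr : G ⟶ 𝟙_ C ⊞ G) ⊗ₘ (biprod.inr : G ⟶ 𝟙_ C ⊞ G)) ≫ F.mul) := by
    rw [hb, Linear.smul_comp, Category.id_comp]
  refine ⟨part1, ?_, ?_⟩
  · -- commutative → d * t = ν
    intro hcomm
    have key : (ν * d * t) • (((biprod.inr : G ⟶ 𝟙_ C ⊞ G) ⊗ₘ (biprod.inr : G ⟶ 𝟙_ C ⊞ G)) ≫ F.mul)
        = ((biprod.inr : G ⟶ 𝟙_ C ⊞ G) ⊗ₘ (biprod.inr : G ⟶ 𝟙_ C ⊞ G)) ≫ F.mul := by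
      rw [← part1, ← Category.assoc, ← BraidedCategory.braiding_naturality, Category.assoc, hcomm]
    have hmne : ((biprod.inr : G ⟶ 𝟙_ C ⊞ G) ⊗ₘ (biprod.inr : G ⟶ 𝟙_ C ⊞ G)) ≫ F.mul ≠ 0 := by
      intro hm0
      -- the zig-zag identity for the Frobenius pairing/copairing
      have hz : (λ_ (𝟙_ C ⊞ G)).inv ≫ ((F.one ≫ F.comul) ▷ (𝟙_ C ⊞ G)) ≫
          (α_ (𝟙_ C ⊞ G) (𝟙_ C ⊞ G) (𝟙_ C ⊞ G)).hom ≫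
          ((𝟙_ C ⊞ G) ◁ (F.mul ≫ F.counit)) ≫ (ρ_ (𝟙_ C ⊞ G)).hom = 𝟙 (𝟙_ C ⊞ G) := by
        rw [comp_whiskerRight, MonoidalCategory.whiskerLeft_comp]
        slice_lhs 3 5 => rw [← F.frobenius'']
        slice_lhs 2 3 => rw [F.one_mul']
        slice_lhs 3 4 => rw [F.comul_counit']
        simp
      have hq1 : ((biprod.inl : 𝟙_ C ⟶ 𝟙_ C ⊞ G) ⊗ₘ (biprod.inr : G ⟶ 𝟙_ C ⊞ G)) ≫ F.mul ≫ F.counit = 0 := by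
        have hr : (λ_ G).inv ≫ ((biprod.inl : 𝟙_ C ⟶ 𝟙_ C ⊞ G) ⊗ₘ (biprod.inr : G ⟶ 𝟙_ C ⊞ G)) ≫
            F.mul ≫ F.counit = 0 := hom_G_to_unit_eq_zero hunit G e hne _
        calc ((biprod.inl : 𝟙_ C ⟶ 𝟙_ C ⊞ G) ⊗ₘ (biprod.inr : G ⟶ 𝟙_ C ⊞ G)) ≫ F.mul ≫ F.counit
            = (λ_ G).hom ≫ ((λ_ G).inv ≫ ((biprod.inl : 𝟙_ C ⟶ 𝟙_ C ⊞ G) ⊗ₘ (biprod.inr : G ⟶ 𝟙_ C ⊞ G)) ≫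
                F.mul ≫ F.counit) := by simp
          _ = 0 := by rw [hr, comp_zero]
      have hq : ((𝟙_ C ⊞ G) ◁ (biprod.inr : G ⟶ 𝟙_ C ⊞ G)) ≫ F.mul ≫ F.counit = 0 := by
        have hm0' : ((biprod.inr : G ⟶ 𝟙_ C ⊞ G) ⊗ₘ (biprod.inr : G ⟶ 𝟙_ C ⊞ G)) ≫ F.mul ≫ F.counit = 0 := by
          rw [← Category.assoc, hm0, zero_comp]
        calc ((𝟙_ C ⊞ G) ◁ (biprod.inr : G ⟶ 𝟙_ C ⊞ G)) ≫ F.mul ≫ F.counit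
            = (𝟙 (𝟙_ C ⊞ G) ▷ G) ≫ ((𝟙_ C ⊞ G) ◁ (biprod.inr : G ⟶ 𝟙_ C ⊞ G)) ≫ F.mul ≫ F.counit := by
              simp
          _ = ((biprod.fst ≫ biprod.inl + biprod.snd ≫ biprod.inr) ▷ G) ≫
              ((𝟙_ C ⊞ G) ◁ (biprod.inr : G ⟶ 𝟙_ C ⊞ G)) ≫ F.mul ≫ F.counit := by rw [biprod.total]
          _ = (biprod.fst ▷ G) ≫ (((biprod.inl : 𝟙_ C ⟶ 𝟙_ C ⊞ G) ⊗ₘ (biprod.inr : G ⟶ 𝟙_ C ⊞ G)) ≫ F.mul ≫ F.counit)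
              + (biprod.snd ▷ G) ≫ (((biprod.inr : G ⟶ 𝟙_ C ⊞ G) ⊗ₘ (biprod.inr : G ⟶ 𝟙_ C ⊞ G)) ≫ F.mul ≫ F.counit) := by
              rw [MonoidalPreadditive.add_whiskerRight, comp_whiskerRight, comp_whiskerRight,
                Preadditive.add_comp]
              simp only [Category.assoc, ← tensorHom_def_assoc]
          _ = 0 := by rw [hq1, hm0', comp_zero, comp_zero, add_zero]
      have hmue : F.mul ≫ F.counit =
          ((𝟙_ C ⊞ G) ◁ (biprod.fst : 𝟙_ C ⊞ G ⟶ 𝟙_ C)) ≫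
            (((𝟙_ C ⊞ G) ◁ (biprod.inl : 𝟙_ C ⟶ 𝟙_ C ⊞ G)) ≫ F.mul ≫ F.counit) := by
        calc F.mul ≫ F.counit
            = ((𝟙_ C ⊞ G) ◁ 𝟙 (𝟙_ C ⊞ G)) ≫ F.mul ≫ F.counit := by simp
          _ = ((𝟙_ C ⊞ G) ◁ (biprod.fst ≫ biprod.inl + biprod.snd ≫ biprod.inr)) ≫ F.mul ≫ F.counit := by
              rw [biprod.total]
          _ = ((𝟙_ C ⊞ G) ◁ (biprod.fst : 𝟙_ C ⊞ G ⟶ 𝟙_ C)) ≫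
                (((𝟙_ C ⊞ G) ◁ (biprod.inl : 𝟙_ C ⟶ 𝟙_ C ⊞ G)) ≫ F.mul ≫ F.counit)
              + ((𝟙_ C ⊞ G) ◁ (biprod.snd : 𝟙_ C ⊞ G ⟶ G)) ≫
                (((𝟙_ C ⊞ G) ◁ (biprod.inr : G ⟶ 𝟙_ C ⊞ G)) ≫ F.mul ≫ F.counit) := by
              rw [MonoidalPreadditive.whiskerLeft_add, MonoidalCategory.whiskerLeft_comp,
                MonoidalCategory.whiskerLeft_comp, Preadditive.add_comp]
              simp only [Category.assoc]
          _ = _ := by rw [hq, comp_zero, add_zero]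
      have hkill : ((𝟙_ C ⊞ G) ◁ ((𝟙_ C ⊞ G) ◁ (biprod.inr : G ⟶ 𝟙_ C ⊞ G))) ≫
          ((𝟙_ C ⊞ G) ◁ ((𝟙_ C ⊞ G) ◁ (biprod.fst : 𝟙_ C ⊞ G ⟶ 𝟙_ C))) = 0 := by
        rw [← MonoidalCategory.whiskerLeft_comp, ← MonoidalCategory.whiskerLeft_comp,
          biprod.inr_fst, MonoidalPreadditive.whiskerLeft_zero,
          MonoidalPreadditive.whiskerLeft_zero]
      have hzero : (biprod.inr : G ⟶ 𝟙_ C ⊞ G) ≫ 𝟙 (𝟙_ C ⊞ G) ≫ (biprod.snd : 𝟙_ C ⊞ G ⟶ G) = 0 := by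
        rw [← hz, hmue, MonoidalCategory.whiskerLeft_comp]
        simp only [Category.assoc]
        rw [leftUnitor_inv_naturality_assoc, whisker_exchange_assoc,
          associator_naturality_right_assoc, reassoc_of% hkill]
        simp
      apply id_G_ne_zero hunit G e
      calc 𝟙 G = (biprod.inr : G ⟶ 𝟙_ C ⊞ G) ≫ 𝟙 (𝟙_ C ⊞ G) ≫ (biprod.snd : 𝟙_ C ⊞ G ⟶ G) := by simp
        _ = 0 := hzero
    have hsub : (ν * d * t - 1) • (((biprod.inr : G ⟶ 𝟙_ C ⊞ G) ⊗ₘ (biprod.inr : G ⟶ 𝟙_ C ⊞ G)) ≫ F.mul) = 0 := by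
      rw [sub_smul, one_smul, key, sub_self]
    by_cases hc : ν * d * t - 1 = 0
    · have h1 : ν * d * t = 1 := by linear_combination hc
      calc d * t = (ν * ν) * (d * t) := by rw [hnu2, one_mul]
        _ = ν * (ν * d * t) := by ring
        _ = ν * 1 := by rw [h1]
        _ = ν := mul_one ν
    · exfalso
      apply hmne
      have h2 := congrArg (fun z => (ν * d * t - 1)⁻¹ • z) hsub
      simpa [smul_smul, inv_mul_cancel₀ hc] using h2
  · -- d * t = ν → commutative
    intro hdt
    have hbb : (β_ G G).hom = 𝟙 (G ⊗ G) := by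
      rw [hb, mul_assoc, hdt, hnu2, one_smul]
    obtain ⟨a, ha⟩ := endomorphism_simple_eq_smul_id ℂ (F.one ≫ biprod.fst)
    have heta2 : F.one ≫ (biprod.snd : 𝟙_ C ⊞ G ⟶ G) = 0 := hom_unit_to_G_eq_zero hunit G e hne _
    have heta : F.one = a • (biprod.inl : 𝟙_ C ⟶ 𝟙_ C ⊞ G) := by
      calc F.one = F.one ≫ 𝟙 (𝟙_ C ⊞ G) := (Category.comp_id _).symm
        _ = F.one ≫ (biprod.fst ≫ biprod.inl + biprod.snd ≫ biprod.inr) := by rw [biprod.total]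
        _ = (F.one ≫ biprod.fst) ≫ biprod.inl + (F.one ≫ biprod.snd) ≫ biprod.inr := by
            rw [Preadditive.comp_add, Category.assoc, Category.assoc]
        _ = a • (biprod.inl : 𝟙_ C ⟶ 𝟙_ C ⊞ G) := by
            rw [← ha, heta2, zero_comp, add_zero, Linear.smul_comp, Category.id_comp]
    have ha0 : a ≠ 0 := by
      intro h0
      apply hF.2
      rw [heta, h0, zero_smul, zero_comp]
    have cancel : ∀ {X Y : C} (u v : X ⟶ Y), a • u = a • v → u = v := by
      intro X Y u v huv
      have h2 := congrArg (fun z => a⁻¹ • z) huv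
      simpa [smul_smul, inv_mul_cancel₀ ha0] using h2
    have h1G : a • (((biprod.inl : 𝟙_ C ⟶ 𝟙_ C ⊞ G) ⊗ₘ (biprod.inr : G ⟶ 𝟙_ C ⊞ G)) ≫ F.mul)
        = (λ_ G).hom ≫ biprod.inr := by
      have h := congrArg (fun z => (𝟙_ C ◁ (biprod.inr : G ⟶ 𝟙_ C ⊞ G)) ≫ z) F.one_mul'
      rw [leftUnitor_naturality, ← Category.assoc, whisker_exchange, Category.assoc,
        heta, MonoidalLinear.smul_whiskerRight, Linear.smul_comp,
        ← tensorHom_def_assoc] at h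
      exact h
    have hG1 : a • (((biprod.inr : G ⟶ 𝟙_ C ⊞ G) ⊗ₘ (biprod.inl : 𝟙_ C ⟶ 𝟙_ C ⊞ G)) ≫ F.mul)
        = (ρ_ G).hom ≫ biprod.inr := by
      have h := congrArg (fun z => ((biprod.inr : G ⟶ 𝟙_ C ⊞ G) ▷ 𝟙_ C) ≫ z) F.mul_one'
      rw [rightUnitor_naturality, ← Category.assoc, ← whisker_exchange, Category.assoc,
        heta, MonoidalLinear.whiskerLeft_smul, Linear.smul_comp,
        ← tensorHom_def'_assoc] at h
      exact h
    have hb11 : (β_ (𝟙_ C) (𝟙_ C)).hom = 𝟙 (𝟙_ C ⊗ 𝟙_ C) := by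
      rw [braiding_tensorUnit_left, unitors_equal, Iso.hom_inv_id]
    have cGen : ∀ {P Q : C} (iP : P ⟶ 𝟙_ C ⊞ G) (iQ : Q ⟶ 𝟙_ C ⊞ G),
        ((β_ P Q).hom ≫ (iQ ⊗ₘ iP) ≫ F.mul = (iP ⊗ₘ iQ) ≫ F.mul) →
        (iP ⊗ₘ iQ) ≫ (β_ (𝟙_ C ⊞ G) (𝟙_ C ⊞ G)).hom ≫ F.mul = (iP ⊗ₘ iQ) ≫ F.mul := by
      intro P Q iP iQ h
      rw [← Category.assoc, BraidedCategory.braiding_naturality, Category.assoc, h]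
    have C11 := cGen (biprod.inl : 𝟙_ C ⟶ 𝟙_ C ⊞ G) (biprod.inl : 𝟙_ C ⟶ 𝟙_ C ⊞ G)
      (by rw [hb11, Category.id_comp])
    have C22 := cGen (biprod.inr : G ⟶ 𝟙_ C ⊞ G) (biprod.inr : G ⟶ 𝟙_ C ⊞ G)
      (by rw [hbb, Category.id_comp])
    have C12 := cGen (biprod.inl : 𝟙_ C ⟶ 𝟙_ C ⊞ G) (biprod.inr : G ⟶ 𝟙_ C ⊞ G) (by
      apply cancel
      rw [← Linear.comp_smul, hG1, h1G, braiding_tensorUnit_left]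
      simp)
    have C21 := cGen (biprod.inr : G ⟶ 𝟙_ C ⊞ G) (biprod.inl : 𝟙_ C ⟶ 𝟙_ C ⊞ G) (by
      apply cancel
      rw [← Linear.comp_smul, h1G, hG1, braiding_tensorUnit_right]
      simp)
    have htot : 𝟙 ((𝟙_ C ⊞ G) ⊗ (𝟙_ C ⊞ G)) =
        (((biprod.fst : 𝟙_ C ⊞ G ⟶ 𝟙_ C) ⊗ₘ (biprod.fst : 𝟙_ C ⊞ G ⟶ 𝟙_ C)) ≫ ((biprod.inl : 𝟙_ C ⟶ 𝟙_ C ⊞ G) ⊗ₘ (biprod.inl : 𝟙_ C ⟶ 𝟙_ C ⊞ G))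
        + ((biprod.fst : 𝟙_ C ⊞ G ⟶ 𝟙_ C) ⊗ₘ (biprod.snd : 𝟙_ C ⊞ G ⟶ G)) ≫ ((biprod.inl : 𝟙_ C ⟶ 𝟙_ C ⊞ G) ⊗ₘ (biprod.inr : G ⟶ 𝟙_ C ⊞ G)))
        + (((biprod.snd : 𝟙_ C ⊞ G ⟶ G) ⊗ₘ (biprod.fst : 𝟙_ C ⊞ G ⟶ 𝟙_ C)) ≫ ((biprod.inr : G ⟶ 𝟙_ C ⊞ G) ⊗ₘ (biprod.inl : 𝟙_ C ⟶ 𝟙_ C ⊞ G))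
        + ((biprod.snd : 𝟙_ C ⊞ G ⟶ G) ⊗ₘ (biprod.snd : 𝟙_ C ⊞ G ⟶ G)) ≫ ((biprod.inr : G ⟶ 𝟙_ C ⊞ G) ⊗ₘ (biprod.inr : G ⟶ 𝟙_ C ⊞ G))) := by
      rw [← id_tensorHom_id, ← biprod.total, MonoidalPreadditive.add_tensor,
        MonoidalPreadditive.tensor_add, MonoidalPreadditive.tensor_add,
        ← tensorHom_comp_tensorHom, ← tensorHom_comp_tensorHom, ← tensorHom_comp_tensorHom, ← tensorHom_comp_tensorHom]
    have expand : ∀ (g : (𝟙_ C ⊞ G) ⊗ (𝟙_ C ⊞ G) ⟶ 𝟙_ C ⊞ G),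
        g = (((biprod.fst : 𝟙_ C ⊞ G ⟶ 𝟙_ C) ⊗ₘ (biprod.fst : 𝟙_ C ⊞ G ⟶ 𝟙_ C)) ≫ ((biprod.inl : 𝟙_ C ⟶ 𝟙_ C ⊞ G) ⊗ₘ (biprod.inl : 𝟙_ C ⟶ 𝟙_ C ⊞ G)) ≫ g
          + ((biprod.fst : 𝟙_ C ⊞ G ⟶ 𝟙_ C) ⊗ₘ (biprod.snd : 𝟙_ C ⊞ G ⟶ G)) ≫ ((biprod.inl : 𝟙_ C ⟶ 𝟙_ C ⊞ G) ⊗ₘ (biprod.inr : G ⟶ 𝟙_ C ⊞ G)) ≫ g)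
          + (((biprod.snd : 𝟙_ C ⊞ G ⟶ G) ⊗ₘ (biprod.fst : 𝟙_ C ⊞ G ⟶ 𝟙_ C)) ≫ ((biprod.inr : G ⟶ 𝟙_ C ⊞ G) ⊗ₘ (biprod.inl : 𝟙_ C ⟶ 𝟙_ C ⊞ G)) ≫ g
          + ((biprod.snd : 𝟙_ C ⊞ G ⟶ G) ⊗ₘ (biprod.snd : 𝟙_ C ⊞ G ⟶ G)) ≫ ((biprod.inr : G ⟶ 𝟙_ C ⊞ G) ⊗ₘ (biprod.inr : G ⟶ 𝟙_ C ⊞ G)) ≫ g) := by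
      intro g
      calc g = 𝟙 ((𝟙_ C ⊞ G) ⊗ (𝟙_ C ⊞ G)) ≫ g := (Category.id_comp g).symm
        _ = _ := by rw [htot]; simp only [Preadditive.add_comp, Category.assoc]
    calc (β_ (𝟙_ C ⊞ G) (𝟙_ C ⊞ G)).hom ≫ F.mul
        = _ := expand _
      _ = _ := by rw [C11, C12, C21, C22]
      _ = F.mul := (expand F.mul).symm
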